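/- Let A be a 3×3 real matrix. If A is a semimonotone matrix of exact order 2 (an E0_2-matrix), then det A < 0; in particular A is invertible. -/

import Mathlib

open Matrix

/-- A real square matrix `A` is semimonotone if for every nonzero entrywise-nonnegative
vector `x` there is an index `i` with `x i > 0` and `(A *ᵥ x) i ≥ 0`. -/
def SemiMonotone {ι : Type*} [Fintype ι] (A : Matrix ι ι ℝ) : Prop :=
  ∀ x : ι → ℝ, x ≠ 0 → 0 ≤ x → ∃ i, 0 < x i ∧ 0 ≤ A.mulVec x i

/-- A real square matrix `A` is strictly semimonotone if for every nonzero
entrywise-nonnegative vector `x` there is an index `i` with `x i > 0` and `(A *ᵥ x) i > 0`. -/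
def StrictlySemiMonotone {ι : Type*} [Fintype ι] (A : Matrix ι ι ℝ) : Prop :=
  ∀ x : ι → ℝ, x ≠ 0 → 0 ≤ x → ∃ i, 0 < x i ∧ 0 < A.mulVec x i

/-- The principal submatrix of `A` with rows and columns indexed by `s`. -/
def PrincipalSubmatrix {n : ℕ} (A : Matrix (Fin n) (Fin n) ℝ) (s : Finset (Fin n)) :
    Matrix s s ℝ := A.submatrix (fun i => (i : Fin n)) (fun j => (j : Fin n))

/-- `A` is a semimonotone matrix of exact order `k` (an `E0_k`-matrix): every principal
submatrix of order `n - k` is semimonotone, but no principal submatrix of order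
`r` with `n - k < r ≤ n` is semimonotone. -/
def SemimonotoneExactOrder {n : ℕ} (A : Matrix (Fin n) (Fin n) ℝ) (k : ℕ) : Prop :=
  (∀ s : Finset (Fin n), s.card = n - k → SemiMonotone (PrincipalSubmatrix A s)) ∧
  (∀ s : Finset (Fin n), n - k < s.card → ¬ SemiMonotone (PrincipalSubmatrix A s))

/-- `A` is a strictly semimonotone matrix of exact order `k` (an `E_k`-matrix). -/
def StrictlySemimonotoneExactOrder {n : ℕ} (A : Matrix (Fin n) (Fin n) ℝ) (k : ℕ) : Prop :=
  (∀ s : Finset (Fin n), s.card = n - k → StrictlySemiMonotone (PrincipalSubmatrix A s)) ∧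
  (∀ s : Finset (Fin n), n - k < s.card → ¬ StrictlySemiMonotone (PrincipalSubmatrix A s))

lemma diag_nonneg (A : Matrix (Fin 3) (Fin 3) ℝ) (i : Fin 3)
    (h : SemiMonotone (PrincipalSubmatrix A {i})) : 0 ≤ A i i := by
  have hi : i ∈ ({i} : Finset (Fin 3)) := Finset.mem_singleton_self i
  obtain ⟨m, -, hm⟩ := h (fun _ => 1)
    (by intro hc; have := congrFun hc ⟨i, hi⟩; norm_num at this)
    (fun _ => zero_le_one)
  have hmi : (m : Fin 3) = i := Finset.mem_singleton.mp m.2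
  have : (PrincipalSubmatrix A {i}).mulVec (fun _ => 1) m
      = ∑ k ∈ ({i} : Finset (Fin 3)), A i k * 1 := by
    rw [Matrix.mulVec, dotProduct]
    have e : ∀ k : ({i} : Finset (Fin 3)),
        PrincipalSubmatrix A {i} m k * (1:ℝ) = (fun t => A i t * 1) (k : Fin 3) := by
      intro k; simp [PrincipalSubmatrix, hmi]
    rw [Finset.sum_congr rfl (fun k _ => e k)]
    exact Finset.sum_coe_sort _ (fun t => A i t * 1)
  rw [this, Finset.sum_singleton, mul_one] at hm
  exact hm

lemma pair_facts (A : Matrix (Fin 3) (Fin 3) ℝ) (i j : Fin 3) (hij : i ≠ j)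
    (hd : 0 ≤ A i i) (hd' : 0 ≤ A j j)
    (h : ¬ SemiMonotone (PrincipalSubmatrix A {i, j})) :
    A i j < 0 ∧ A j i < 0 ∧ A i i * A j j - A i j * A j i < 0 := by
  simp only [SemiMonotone, not_forall, not_exists, not_and, not_le] at h
  obtain ⟨x, hx0, hxnn, hx⟩ := h
  have hi : i ∈ ({i, j} : Finset (Fin 3)) := by simp
  have hj : j ∈ ({i, j} : Finset (Fin 3)) := by simp
  set mi : ({i, j} : Finset (Fin 3)) := ⟨i, hi⟩
  set mj : ({i, j} : Finset (Fin 3)) := ⟨j, hj⟩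
  set x1 := x mi with hx1def
  set x2 := x mj with hx2def
  -- mulVec formula
  have key : ∀ m : ({i, j} : Finset (Fin 3)),
      (PrincipalSubmatrix A {i, j}).mulVec x m = A m i * x1 + A m j * x2 := by
    intro m
    rw [Matrix.mulVec, dotProduct]
    have : ∀ k : ({i, j} : Finset (Fin 3)),
        PrincipalSubmatrix A {i, j} m k * x k
          = (fun t => A (m : Fin 3) t * (if ht : t ∈ ({i, j} : Finset (Fin 3)) then x ⟨t, ht⟩ else 0)) (k : Fin 3) := by
      intro k; simp [PrincipalSubmatrix]
    rw [Finset.sum_congr rfl (fun k _ => this k)]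
    rw [Finset.sum_coe_sort _ (fun t => A (m : Fin 3) t * (if ht : t ∈ ({i, j} : Finset (Fin 3)) then x ⟨t, ht⟩ else 0))]
    rw [Finset.sum_pair hij]
    simp [hi, hj]
    rfl
  have hvi := hx mi
  have hvj := hx mj
  rw [key mi] at hvi
  rw [key mj] at hvj
  have hx1nn : 0 ≤ x1 := hxnn mi
  have hx2nn : 0 ≤ x2 := hxnn mj
  -- x1 > 0 or x2 > 0
  have hor : 0 < x1 ∨ 0 < x2 := by
    by_contra hc
    push_neg at hc
    have e1 : x1 = 0 := le_antisymm hc.1 hx1nn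
    have e2 : x2 = 0 := le_antisymm hc.2 hx2nn
    apply hx0
    funext m
    rcases Finset.mem_insert.mp m.2 with hm | hm
    · have : m = mi := Subtype.ext hm
      rw [this]; exact e1
    · have : m = mj := Subtype.ext (Finset.mem_singleton.mp hm)
      rw [this]; exact e2
  have main : 0 < x1 ∧ 0 < x2 ∧ A i j < 0 ∧ A j i < 0 := by
    rcases hor with h1 | h2
    · have hvi' := hvi h1
      have hb : A i j * x2 < 0 := by nlinarith [mul_nonneg hd hx1nn]
      have hx2 : 0 < x2 := by
        rcases lt_or_eq_of_le hx2nn with h | h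
        · exact h
        · exfalso; rw [← h] at hb; simp at hb
      have hbneg : A i j < 0 := by nlinarith
      have hvj' := hvj hx2
      have hc : A j i * x1 < 0 := by nlinarith [mul_nonneg hd' hx2nn]
      have hcneg : A j i < 0 := by nlinarith
      exact ⟨h1, hx2, hbneg, hcneg⟩
    · have hvj' := hvj h2
      have hc : A j i * x1 < 0 := by nlinarith [mul_nonneg hd' hx2nn]
      have hx1 : 0 < x1 := by
        rcases lt_or_eq_of_le hx1nn with h | h
        · exact h
        · exfalso; rw [← h] at hc; simp at hc
      have hcneg : A j i < 0 := by nlinarith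
      have hvi' := hvi hx1
      have hb : A i j * x2 < 0 := by nlinarith [mul_nonneg hd hx1nn]
      have hbneg : A i j < 0 := by nlinarith
      exact ⟨hx1, h2, hbneg, hcneg⟩
  obtain ⟨hx1, hx2, hbneg, hcneg⟩ := main
  refine ⟨hbneg, hcneg, ?_⟩
  have hvi' := hvi hx1
  have hvj' := hvj hx2
  have e1 : A i i * x1 < -(A i j * x2) := by linarith
  have e2 : A j j * x2 < -(A j i * x1) := by linarith
  have k1 : 0 ≤ A i i * x1 := mul_nonneg hd hx1.le
  have k2 : 0 ≤ A j j * x2 := mul_nonneg hd' hx2.le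
  have keym := mul_lt_mul'' e1 e2 k1 k2
  nlinarith [mul_pos hx1 hx2]

theorem stmt6 (A : Matrix (Fin 3) (Fin 3) ℝ) (hA : SemimonotoneExactOrder A 2) :
    A.det < 0 := by
  obtain ⟨h1, h2⟩ := hA
  have d0 : 0 ≤ A 0 0 := diag_nonneg A 0 (h1 {0} (by decide))
  have d1 : 0 ≤ A 1 1 := diag_nonneg A 1 (h1 {1} (by decide))
  have d2 : 0 ≤ A 2 2 := diag_nonneg A 2 (h1 {2} (by decide))
  obtain ⟨b01, b10, -⟩ := pair_facts A 0 1 (by decide) d0 d1 (h2 {0, 1} (by decide))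
  obtain ⟨b02, b20, -⟩ := pair_facts A 0 2 (by decide) d0 d2 (h2 {0, 2} (by decide))
  obtain ⟨b12, b21, m12⟩ := pair_facts A 1 2 (by decide) d1 d2 (h2 {1, 2} (by decide))
  rw [Matrix.det_fin_three]
  nlinarith [mul_nonpos_of_nonneg_of_nonpos d0 m12.le,
    mul_nonneg (mul_pos_of_neg_of_neg b01 b10).le d2,
    mul_neg_of_pos_of_neg (mul_pos_of_neg_of_neg b01 b12) b20,
    mul_neg_of_pos_of_neg (mul_pos_of_neg_of_neg b02 b10) b21,
    mul_nonneg (mul_pos_of_neg_of_neg b02 b20).le d1]
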